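/- Let a : ℕ → ℤ satisfy a(0) = a(1) = 1 and a(n) = 1 + 2·∑_{m=1}^{n-1} a(m)·a(n−m) for n ≥ 2. Then for all n ≥ 0, a(n+1) = ∑_{k=0}^{n} C(n,k)·2^k·Catalan(k), where Catalan(k) = C(2k,k)/(k+1). -/

import Mathlib

open Finset

noncomputable def cc (k : ℕ) : ℚ := 2 ^ k * catalan k

lemma cc_zero : cc 0 = 1 := by simp [cc]

lemma cc_succ (s : ℕ) : cc (s + 1) = 2 * ∑ i ∈ range (s + 1), cc i * cc (s - i) := by
  simp only [cc]
  rw [catalan_succ, Fin.sum_univ_eq_sum_range (fun i => catalan i * catalan (s - i))]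
  push_cast
  rw [Finset.mul_sum, Finset.mul_sum]
  apply Finset.sum_congr rfl
  intro i hi
  simp only [Finset.mem_range] at hi
  have h2 : (2:ℚ)^(s+1) = 2 * (2^i * 2^(s-i)) := by
    rw [← pow_add, ← pow_succ']
    congr 1
    omega
  rw [h2]; ring

lemma vander : ∀ n i j : ℕ, ∑ m ∈ range (n + 1), m.choose i * (n - m).choose j
    = (n + 1).choose (i + j + 1) := by
  intro n
  induction n with
  | zero =>
    intro i j
    simp only [Finset.sum_range_one, Nat.zero_sub]
    match i, j with
    | 0, 0 => rfl
    | 0, (j+1) => simp; rw [Nat.choose_eq_zero_of_lt]; omega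
    | (i+1), j => simp [Nat.choose_eq_zero_of_lt]
  | succ n ih =>
    intro i j
    match j with
    | 0 =>
      rw [Finset.sum_range_succ]
      have h : ∀ m ∈ range (n+1), m.choose i * (n + 1 - m).choose 0 = m.choose i * (n - m).choose 0 := by
        intro m hm; simp
      rw [Finset.sum_congr rfl h, ih i 0, Nat.sub_self, Nat.choose_zero_right, mul_one]
      simp only [Nat.add_zero]
      simp only [Nat.choose_succ_succ, Nat.succ_eq_add_one]
      omega
    | (j+1) =>
      rw [Finset.sum_range_succ]
      have h : ∀ m ∈ range (n+1), m.choose i * (n + 1 - m).choose (j+1)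
          = m.choose i * (n - m).choose j + m.choose i * (n - m).choose (j+1) := by
        intro m hm
        simp only [Finset.mem_range] at hm
        have h1 : n + 1 - m = (n - m) + 1 := by omega
        rw [h1, Nat.choose_succ_succ, Nat.mul_add]
      rw [Finset.sum_congr rfl h, Finset.sum_add_distrib, ih i j, ih i (j+1),
        Nat.sub_self]
      have h2 : i + (j+1) = i + j + 1 := by omega
      rw [h2]
      simp only [Nat.choose_succ_succ, Nat.succ_eq_add_one, Nat.choose_zero_succ]
      omega

noncomputable def bb (n : ℕ) : ℚ := ∑ k ∈ range (n + 1), (n.choose k : ℚ) * cc k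

lemma bb_zero : bb 0 = 1 := by simp [bb, cc]

lemma bb_ext (n M : ℕ) (h : n ≤ M) :
    bb n = ∑ k ∈ range (M + 1), (n.choose k : ℚ) * cc k := by
  apply Finset.sum_subset
  · exact Finset.range_subset_range.2 (by omega)
  · intro k hk hk2
    simp only [Finset.mem_range] at hk hk2
    rw [Nat.choose_eq_zero_of_lt (by omega)]
    simp

lemma vanderQ (N i j : ℕ) :
    ∑ m ∈ range (N + 1), (m.choose i : ℚ) * ((N - m).choose j : ℚ)
      = ((N + 1).choose (i + j + 1) : ℚ) := by
  rw [← vander N i j]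
  push_cast
  rfl

lemma key (N : ℕ) : bb (N + 1) = 1 + 2 * ∑ m ∈ range (N + 1), bb m * bb (N - m) := by
  have hsq : ∑ m ∈ range (N + 1), bb m * bb (N - m)
      = ∑ i ∈ range (N + 2), ∑ j ∈ range (N + 2),
          (cc i * cc j) * ((N + 1).choose (i + j + 1) : ℚ) := by
    have step1 : ∀ m ∈ range (N + 1), bb m * bb (N - m)
        = ∑ i ∈ range (N + 2), ∑ j ∈ range (N + 2),
            (cc i * cc j) * ((m.choose i : ℚ) * ((N - m).choose j : ℚ)) := by
      intro m hm
      simp only [Finset.mem_range] at hm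
      rw [bb_ext m (N+1) (by omega), bb_ext (N-m) (N+1) (by omega), Finset.sum_mul_sum]
      apply Finset.sum_congr rfl; intro i _
      apply Finset.sum_congr rfl; intro j _
      ring
    rw [Finset.sum_congr rfl step1, Finset.sum_comm]
    apply Finset.sum_congr rfl; intro i _
    rw [Finset.sum_comm]
    apply Finset.sum_congr rfl; intro j _
    rw [← Finset.mul_sum, vanderQ]
  have hshrink : ∀ i ∈ range (N + 2),
      ∑ j ∈ range (N + 2), (cc i * cc j) * ((N + 1).choose (i + j + 1) : ℚ)
        = ∑ j ∈ range (N + 1 - i), (cc i * cc j) * ((N + 1).choose (i + j + 1) : ℚ) := by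
    intro i hi
    symm
    apply Finset.sum_subset
    · exact Finset.range_subset_range.2 (by omega)
    · intro j hj hj2
      simp only [Finset.mem_range] at hj hj2
      rw [Nat.choose_eq_zero_of_lt (by omega)]
      simp
  have hgroup : ∑ i ∈ range (N + 2), ∑ j ∈ range (N + 1 - i),
        (cc i * cc j) * ((N + 1).choose (i + j + 1) : ℚ)
      = ∑ s ∈ range (N + 1), ∑ i ∈ range (s + 1),
          cc i * cc (s - i) * ((N + 1).choose (s + 1) : ℚ) := by
    rw [Finset.sum_range_succ]
    simp only [Nat.sub_self, Finset.range_zero, Finset.sum_empty, add_zero]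
    rw [Finset.sum_sigma' (range (N+1)) (fun i => range (N+1-i))
      (fun i j => (cc i * cc j) * ((N + 1).choose (i + j + 1) : ℚ)),
      Finset.sum_sigma' (range (N+1)) (fun s => range (s+1))
      (fun s i => cc i * cc (s - i) * ((N + 1).choose (s + 1) : ℚ))]
    apply Finset.sum_nbij' (fun p => (⟨p.1 + p.2, p.1⟩ : Σ _ : ℕ, ℕ))
      (fun p => (⟨p.2, p.1 - p.2⟩ : Σ _ : ℕ, ℕ))
    · intro p hp
      simp only [Finset.mem_sigma, Finset.mem_range] at hp ⊢
      omega
    · intro p hp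
      simp only [Finset.mem_sigma, Finset.mem_range] at hp ⊢
      omega
    · intro p hp
      simp only [Finset.mem_sigma, Finset.mem_range] at hp
      simp only [Nat.add_sub_cancel_left]
    · intro p hp
      simp only [Finset.mem_sigma, Finset.mem_range] at hp
      have : p.2 + (p.1 - p.2) = p.1 := by omega
      simp [this]
    · intro p hp
      simp only [Finset.mem_sigma, Finset.mem_range] at hp
      simp only [Nat.add_sub_cancel_left]
  rw [hsq, Finset.sum_congr rfl hshrink, hgroup]
  rw [bb, Finset.sum_range_succ']
  simp only [Nat.choose_zero_right, Nat.cast_one, one_mul, cc_zero]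
  rw [Finset.mul_sum]
  rw [add_comm]
  congr 1
  apply Finset.sum_congr rfl
  intro s _
  rw [cc_succ, Finset.mul_sum, Finset.mul_sum, Finset.mul_sum]
  apply Finset.sum_congr rfl
  intro i _
  ring

lemma cat_q (k : ℕ) : (((2 * k).choose k : ℚ)) / (k + 1) = (catalan k : ℚ) := by
  have h : ((2 * k).choose k : ℚ) = (k + 1) * (catalan k : ℚ) := by
    have := succ_mul_catalan_eq_centralBinom k
    have h2 : k.centralBinom = (2 * k).choose k := rfl
    rw [h2] at this
    exact_mod_cast this.symm
  rw [h]
  have hk : (k : ℚ) + 1 ≠ 0 := by positivity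
  field_simp

theorem stmt_8 (a : ℕ → ℤ) (h0 : a 0 = 1) (h1 : a 1 = 1)
    (hrec : ∀ n, 2 ≤ n → a n = 1 + 2 * ∑ m ∈ Finset.Ico 1 n, a m * a (n - m)) :
    ∀ n : ℕ, (a (n + 1) : ℚ) = ∑ k ∈ Finset.range (n + 1),
      (n.choose k : ℚ) * 2^k * (((2*k).choose k : ℚ) / (k + 1)) := by
  have hmain : ∀ n : ℕ, (a (n + 1) : ℚ) = bb n := by
    intro n
    induction n using Nat.strong_induction_on with
    | _ n ih =>
      match n with
      | 0 => rw [h1, bb_zero]; norm_num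
      | (N+1) =>
        have hr := hrec (N + 2) (by omega)
        have hcast : (a (N + 2) : ℚ) = 1 + 2 * ∑ m ∈ Finset.Ico 1 (N + 2),
            (a m : ℚ) * (a (N + 2 - m) : ℚ) := by
          rw [hr]; push_cast; ring
        rw [hcast, Finset.sum_Ico_eq_sum_range]
        have hterm : ∀ i ∈ range (N + 2 - 1), (a (1 + i) : ℚ) * (a (N + 2 - (1 + i)) : ℚ)
            = bb i * bb (N - i) := by
          intro i hi
          simp only [Finset.mem_range] at hi
          have e1 : 1 + i = i + 1 := by omega
          have e2 : N + 2 - (i + 1) = (N - i) + 1 := by omega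
          rw [e1, e2, ih i (by omega), ih (N - i) (by omega)]
        rw [Finset.sum_congr rfl hterm]
        have e3 : N + 2 - 1 = N + 1 := by omega
        rw [e3, ← key N]
  intro n
  rw [hmain n, bb]
  apply Finset.sum_congr rfl
  intro k _
  rw [cat_q, cc]
  ring
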